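/- Let C_v > 0, κ > 0, set μ = κ²/2, A₁ = C_v/κ², A₂ = 2C_v/κ², and let Φ denote the standard normal CDF. Define g(v) = e^{v²/2}(A₁ e^{−v²} + A₂(Φ(v) − 1)) for v ≥ 0 and g(v) = e^{v²/2}(−A₁ e^{−v²} + A₂ Φ(v)) for v < 0, and y(v) = ∫₀^v g(u) du. Then g is continuous at 0 (which holds precisely because A₂ = 2A₁), y is C², and for all v ∈ ℝ the equation ½κ² y''(v) − μ v y'(v) + C_v|v| e^{−v²/2} = C_v/√(2π) holds. Hence (y(V_t), κ g(V_t), C_v/√(2π)) is a Markovian solution of the ergodic BSDE with driver F(v) = C_v |v| e^{−v²/2} and ergodic cost λ = C_v/√(2π), where dV_t = −μ V_t dt + κ dW_t. -/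

import Mathlib

open MeasureTheory

/-- explicit Markovian solution of the ergodic BSDE with driver
`F(v) = C_v |v| e^{-v²/2}`, mean reversion `μ = κ²/2`, and ergodic cost
`λ = C_v/√(2π)`. -/
theorem stmt7 (κ Cv : ℝ) (hκ : 0 < κ) (hCv : 0 < Cv) :
    let μc := κ^2/2
    let A₁ := Cv/κ^2
    let A₂ := 2*Cv/κ^2
    let Φ : ℝ → ℝ := fun x =>
      (Real.sqrt (2*Real.pi))⁻¹ * ∫ u in Set.Iic x, Real.exp (-u^2/2)
    let g : ℝ → ℝ := fun v =>
      if 0 ≤ v then Real.exp (v^2/2) * (A₁ * Real.exp (-v^2) + A₂ * (Φ v - 1))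
      else Real.exp (v^2/2) * (-A₁ * Real.exp (-v^2) + A₂ * Φ v)
    let y : ℝ → ℝ := fun v => ∫ u in (0:ℝ)..v, g u
    ContinuousAt g 0 ∧
    (∀ v, HasDerivAt y (g v) v) ∧
    (∀ v, (1/2) * κ^2 * deriv g v - μc * v * g v + Cv * |v| * Real.exp (-v^2/2)
        = Cv / Real.sqrt (2*Real.pi)) := by
  intro μc A₁ A₂ Φ g y
  have hκ2 : (κ:ℝ)^2 ≠ 0 := by positivity
  set c : ℝ := (Real.sqrt (2*Real.pi))⁻¹ with hcdef
  -- integrand facts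
  have hcont : Continuous (fun u : ℝ => Real.exp (-u^2/2)) := by
    exact Real.continuous_exp.comp (by continuity)
  have hInt : MeasureTheory.Integrable (fun u : ℝ => Real.exp (-u^2/2)) := by
    have h := integrable_exp_neg_mul_sq (b := (1:ℝ)/2) (by norm_num)
    have he : (fun u : ℝ => Real.exp (-u^2/2)) = fun x : ℝ => Real.exp (-((1:ℝ)/2) * x^2) := by
      funext x; congr 1; ring
    rw [he]; exact h
  -- derivative of Φ
  have hΦd : ∀ x : ℝ, HasDerivAt Φ (c * Real.exp (-x^2/2)) x := by
    intro x
    have h1 : Φ = fun z => c * ((∫ u in Set.Iic (0:ℝ), Real.exp (-u^2/2))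
        + ∫ u in (0:ℝ)..z, Real.exp (-u^2/2)) := by
      funext z
      have h := intervalIntegral.integral_Iic_sub_Iic (μ := volume) (a := (0:ℝ)) (b := z)
        hInt.integrableOn hInt.integrableOn
      show c * _ = _
      rw [← h]; ring
    rw [h1]
    exact (((hcont.integral_hasStrictDerivAt 0 x).hasDerivAt).const_add _).const_mul c
  -- the two smooth pieces
  set gp : ℝ → ℝ := fun v => Real.exp (v^2/2) * (A₁ * Real.exp (-v^2) + A₂ * (Φ v - 1)) with hgpdef
  set gm : ℝ → ℝ := fun v => Real.exp (v^2/2) * (-A₁ * Real.exp (-v^2) + A₂ * Φ v) with hgmdef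
  have hg_if : ∀ v, g v = if 0 ≤ v then gp v else gm v := fun v => rfl
  have key0 : gp 0 = gm 0 := by
    show Real.exp _ * (A₁ * Real.exp _ + A₂ * (Φ 0 - 1)) = Real.exp _ * (-A₁ * Real.exp _ + A₂ * Φ 0)
    have hA : A₂ = 2 * A₁ := by show 2*Cv/κ^2 = 2*(Cv/κ^2); ring
    rw [hA]; norm_num; ring
  have hexp1 : ∀ v : ℝ, HasDerivAt (fun v : ℝ => Real.exp (v^2/2)) (v * Real.exp (v^2/2)) v := by
    intro v
    have h : HasDerivAt (fun v : ℝ => v^2/2) v v := by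
      have := (hasDerivAt_pow 2 v).div_const 2
      refine this.congr_deriv (Eq.symm ?_); simp
    have := h.exp
    convert this using 1; ring
  have hexp2 : ∀ v : ℝ, HasDerivAt (fun v : ℝ => Real.exp (-v^2)) (-2*v*Real.exp (-v^2)) v := by
    intro v
    have h : HasDerivAt (fun v : ℝ => -v^2) (-(2*v)) v := by
      have := (hasDerivAt_pow 2 v).neg
      refine this.congr_deriv (Eq.symm ?_); simp
    have := h.exp
    convert this using 1; ring
  have hE : ∀ v : ℝ, Real.exp (v^2/2) * Real.exp (-v^2) = Real.exp (-v^2/2) := by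
    intro v; rw [← Real.exp_add]; congr 1; ring
  have hE2 : ∀ v : ℝ, Real.exp (v^2/2) * Real.exp (-v^2/2) = 1 := by
    intro v; rw [← Real.exp_add, show v^2/2 + -v^2/2 = 0 by ring, Real.exp_zero]
  have hgpd : ∀ v : ℝ, HasDerivAt gp (v * gp v - 2*A₁*v*Real.exp (-v^2/2) + A₂ * c) v := by
    intro v
    have h := (hexp1 v).mul
      (((hexp2 v).const_mul A₁).add (((hΦd v).sub_const 1).const_mul A₂))
    refine h.congr_deriv (Eq.symm ?_)
    show v * (Real.exp (v^2/2) * (A₁ * Real.exp (-v^2) + A₂ * (Φ v - 1)))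
        - 2*A₁*v*Real.exp (-v^2/2) + A₂ * c = _
    simp only [Pi.add_apply]; have h1 := hE v; have h2 := hE2 v
    linear_combination (2*A₁*v) * h1 - (A₂*c) * h2
  have hgmd : ∀ v : ℝ, HasDerivAt gm (v * gm v + 2*A₁*v*Real.exp (-v^2/2) + A₂ * c) v := by
    intro v
    have h := (hexp1 v).mul
      (((hexp2 v).const_mul (-A₁)).add ((hΦd v).const_mul A₂))
    refine h.congr_deriv (Eq.symm ?_)
    show v * (Real.exp (v^2/2) * (-A₁ * Real.exp (-v^2) + A₂ * Φ v))
        + 2*A₁*v*Real.exp (-v^2/2) + A₂ * c = _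
    simp only [Pi.add_apply]; have h1 := hE v; have h2 := hE2 v
    linear_combination (-(2*A₁*v)) * h1 - (A₂*c) * h2
  -- derivative of g everywhere
  have hgd : ∀ v : ℝ, HasDerivAt g
      (v * g v + (if 0 ≤ v then (-1:ℝ) else 1) * (2*A₁*v*Real.exp (-v^2/2)) + A₂ * c) v := by
    intro v
    rcases lt_trichotomy v 0 with hv | hv | hv
    · have heq : g =ᶠ[nhds v] gm := by
        filter_upwards [Iio_mem_nhds hv] with x hx
        rw [hg_if x, if_neg (not_le.mpr hx)]
      have h := (hgmd v).congr_of_eventuallyEq heq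
      refine h.congr_deriv (Eq.symm ?_)
      rw [hg_if v, if_neg (not_le.mpr hv), if_neg (not_le.mpr hv)]; ring
    · subst hv
      have h1 : HasDerivWithinAt g (A₂ * c) (Set.Ici 0) 0 := by
        have h := HasDerivWithinAt.congr (f₁ := g)
          ((hgpd 0).hasDerivWithinAt (s := Set.Ici (0:ℝ)))
          (fun x hx => by rw [hg_if x, if_pos (Set.mem_Ici.mp hx)]) (by rw [hg_if 0, if_pos le_rfl])
        refine h.congr_deriv (Eq.symm ?_); ring
      have h2 : HasDerivWithinAt g (A₂ * c) (Set.Iic 0) 0 := by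
        have h := HasDerivWithinAt.congr (f₁ := g)
          ((hgmd 0).hasDerivWithinAt (s := Set.Iic (0:ℝ)))
          (fun x hx => by
            rcases lt_or_eq_of_le (Set.mem_Iic.mp hx) with h' | h'
            · rw [hg_if x, if_neg (not_le.mpr h')]
            · subst h'; rw [hg_if 0, if_pos le_rfl, key0])
          (by rw [hg_if 0, if_pos le_rfl, key0])
        refine h.congr_deriv (Eq.symm ?_); ring
      have h3 := h2.union h1
      rw [Set.Iic_union_Ici] at h3
      have h4 := h3.hasDerivAt Filter.univ_mem
      refine h4.congr_deriv (Eq.symm ?_)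
      rw [if_pos le_rfl]; ring
    · have heq : g =ᶠ[nhds v] gp := by
        filter_upwards [Ioi_mem_nhds hv] with x hx
        rw [hg_if x, if_pos (le_of_lt hx)]
      have h := (hgpd v).congr_of_eventuallyEq heq
      refine h.congr_deriv (Eq.symm ?_)
      rw [hg_if v, if_pos (le_of_lt hv), if_pos (le_of_lt hv)]; ring
  have hgc : Continuous g := continuous_iff_continuousAt.mpr fun v => (hgd v).continuousAt
  refine ⟨hgc.continuousAt, fun v => (hgc.integral_hasStrictDerivAt 0 v).hasDerivAt, ?_⟩
  intro v
  rw [(hgd v).deriv]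
  have hμ : μc = κ^2/2 := rfl
  have h₁ : A₁ = Cv/κ^2 := rfl
  have h₂ : A₂ = 2*Cv/κ^2 := rfl
  have hs : Real.sqrt (2*Real.pi) ≠ 0 := by positivity
  rw [hμ, h₁, h₂, hcdef]
  rcases le_or_gt 0 v with hv | hv
  · rw [if_pos hv, abs_of_nonneg hv]
    field_simp
    ring
  · rw [if_neg (not_le.mpr hv), abs_of_neg hv]
    field_simp
    ring
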